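/- Let T : C → C be a contraction with constant θ ∈ (0,1) on a nonempty closed convex subset C of a Banach space with fixed point p, and let (xₙ) be the K iteration with αₙ, βₙ ∈ [0,1] satisfying ∑ αₙβₙ = ∞. Then xₙ converges strongly to p. -/

import Mathlib

open Filter

theorem stmt_3 {X : Type*} [NormedAddCommGroup X] [NormedSpace ℝ X] [CompleteSpace X]
    (C : Set X) (hCne : C.Nonempty) (hCcl : IsClosed C) (hCcv : Convex ℝ C)
    (T : X → X) (hTC : ∀ x ∈ C, T x ∈ C) (θ : ℝ) (hθ : θ ∈ Set.Ioo (0:ℝ) 1)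
    (hT : ∀ x ∈ C, ∀ y ∈ C, ‖T x - T y‖ ≤ θ * ‖x - y‖)
    (p : X) (hpC : p ∈ C) (hp : T p = p)
    (α β : ℕ → ℝ) (hα : ∀ n, α n ∈ Set.Icc (0:ℝ) 1) (hβ : ∀ n, β n ∈ Set.Icc (0:ℝ) 1)
    (hdiv : Tendsto (fun N => ∑ k ∈ Finset.range N, α k * β k) atTop atTop)
    (x z y : ℕ → X) (hx0 : x 0 ∈ C)
    (hz : ∀ n, z n = (1 - β n) • x n + β n • T (x n))
    (hy : ∀ n, y n = T ((1 - α n) • T (x n) + α n • T (z n)))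
    (hx : ∀ n, x (n + 1) = T (y n)) :
    Tendsto x atTop (nhds p) := by
  obtain ⟨hθ0, hθ1⟩ := hθ
  have hθ0' : (0:ℝ) ≤ θ := le_of_lt hθ0
  -- membership of all iterates in C
  have hzC : ∀ n, x n ∈ C → z n ∈ C := fun n hxn => by
    rw [hz n]
    exact hCcv hxn (hTC _ hxn) (by linarith [(hβ n).2]) (hβ n).1 (by ring)
  have hwC : ∀ n, x n ∈ C → (1 - α n) • T (x n) + α n • T (z n) ∈ C := fun n hxn =>
    hCcv (hTC _ hxn) (hTC _ (hzC n hxn)) (by linarith [(hα n).2]) (hα n).1 (by ring)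
  have hmemC : ∀ n, x n ∈ C := by
    intro n
    induction n with
    | zero => exact hx0
    | succ n ih =>
      rw [hx n]
      exact hTC _ (by rw [hy n]; exact hTC _ (hwC n ih))
  -- convex combination norm bound
  have combo : ∀ (a b : X) (t : ℝ), 0 ≤ t → t ≤ 1 →
      ‖(1 - t) • a + t • b - p‖ ≤ (1 - t) * ‖a - p‖ + t * ‖b - p‖ := by
    intro a b t ht0 ht1
    have : (1 - t) • a + t • b - p = (1 - t) • (a - p) + t • (b - p) := by
      module
    rw [this]
    calc ‖(1 - t) • (a - p) + t • (b - p)‖ ≤ ‖(1 - t) • (a - p)‖ + ‖t • (b - p)‖ :=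
          norm_add_le _ _
      _ = (1 - t) * ‖a - p‖ + t * ‖b - p‖ := by
          rw [norm_smul, norm_smul, Real.norm_of_nonneg (by linarith),
            Real.norm_of_nonneg ht0]
  -- key contraction estimate
  have key : ∀ n, ‖x (n + 1) - p‖ ≤ θ * ‖x n - p‖ := by
    intro n
    have hxn := hmemC n
    have hTxn : ‖T (x n) - p‖ ≤ θ * ‖x n - p‖ := by
      have := hT _ hxn _ hpC; rwa [hp] at this
    have hzn : ‖z n - p‖ ≤ ‖x n - p‖ := by
      rw [hz n]
      calc ‖(1 - β n) • x n + β n • T (x n) - p‖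
          ≤ (1 - β n) * ‖x n - p‖ + β n * ‖T (x n) - p‖ :=
            combo _ _ _ (hβ n).1 (hβ n).2
        _ ≤ (1 - β n) * ‖x n - p‖ + β n * (θ * ‖x n - p‖) := by
            have := mul_le_mul_of_nonneg_left hTxn (hβ n).1
            linarith
        _ ≤ ‖x n - p‖ := by
            nlinarith [mul_nonneg (mul_nonneg (hβ n).1 (sub_nonneg.mpr hθ1.le))
              (norm_nonneg (x n - p))]
    have hTzn : ‖T (z n) - p‖ ≤ θ * ‖x n - p‖ := by
      calc ‖T (z n) - p‖ ≤ θ * ‖z n - p‖ := by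
            have := hT _ (hzC n hxn) _ hpC; rwa [hp] at this
        _ ≤ θ * ‖x n - p‖ := mul_le_mul_of_nonneg_left hzn hθ0'
    have hw : ‖(1 - α n) • T (x n) + α n • T (z n) - p‖ ≤ θ * ‖x n - p‖ := by
      calc ‖(1 - α n) • T (x n) + α n • T (z n) - p‖
          ≤ (1 - α n) * ‖T (x n) - p‖ + α n * ‖T (z n) - p‖ :=
            combo _ _ _ (hα n).1 (hα n).2
        _ ≤ (1 - α n) * (θ * ‖x n - p‖) + α n * (θ * ‖x n - p‖) := by
            have h1 := mul_le_mul_of_nonneg_left hTxn (by linarith [(hα n).2] : (0:ℝ) ≤ 1 - α n)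
            have h2 := mul_le_mul_of_nonneg_left hTzn (hα n).1
            linarith
        _ = θ * ‖x n - p‖ := by ring
    have hyn : ‖y n - p‖ ≤ θ * (θ * ‖x n - p‖) := by
      rw [hy n]
      calc ‖T ((1 - α n) • T (x n) + α n • T (z n)) - p‖
          ≤ θ * ‖(1 - α n) • T (x n) + α n • T (z n) - p‖ := by
            have := hT _ (hwC n hxn) _ hpC; rwa [hp] at this
        _ ≤ θ * (θ * ‖x n - p‖) := mul_le_mul_of_nonneg_left hw hθ0'
    calc ‖x (n + 1) - p‖ = ‖T (y n) - p‖ := by rw [hx n]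
      _ ≤ θ * ‖y n - p‖ := by
          have := hT _ (by rw [hy n]; exact hTC _ (hwC n hxn) : y n ∈ C) _ hpC
          rwa [hp] at this
      _ ≤ θ * (θ * (θ * ‖x n - p‖)) := mul_le_mul_of_nonneg_left hyn hθ0'
      _ ≤ θ * ‖x n - p‖ := by
          have hθ2 : θ * θ ≤ 1 := by nlinarith
          nlinarith [mul_nonneg hθ0' (norm_nonneg (x n - p)), hθ2]
  -- geometric decay
  have geom : ∀ n, ‖x n - p‖ ≤ θ ^ n * ‖x 0 - p‖ := by
    intro n
    induction n with
    | zero => simp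
    | succ n ih =>
      calc ‖x (n + 1) - p‖ ≤ θ * ‖x n - p‖ := key n
        _ ≤ θ * (θ ^ n * ‖x 0 - p‖) := mul_le_mul_of_nonneg_left ih hθ0'
        _ = θ ^ (n + 1) * ‖x 0 - p‖ := by ring
  have h0 : Tendsto (fun n => ‖x n - p‖) atTop (nhds 0) := by
    have hg : Tendsto (fun n => θ ^ n * ‖x 0 - p‖) atTop (nhds 0) := by
      have := (tendsto_pow_atTop_nhds_zero_of_lt_one hθ0' hθ1).mul_const ‖x 0 - p‖
      simpa using this
    exact squeeze_zero (fun n => norm_nonneg _) geom hg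
  have : Tendsto (fun n => x n - p) atTop (nhds 0) := tendsto_zero_iff_norm_tendsto_zero.mpr h0
  simpa using this.add_const p
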